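/- Let r ≥ 2 and k ≥ 2 be integers. The number of tuples (i_1, i_2, …, i_k) with each i_j ∈ {1,…,r} satisfying i_1 > i_2 ≤ i_3 ≤ … ≤ i_k equals M(r,k) = (k-1) · binomial(k + r - 2, k). -/

import Mathlib

lemma sm_add_le {n : ℕ} {f : Fin n → ℕ} (hf : StrictMono f) (i : Fin n) :
    ∀ (d : ℕ) (h : (i : ℕ) + d < n), f i + d ≤ f ⟨(i : ℕ) + d, h⟩ := by
  intro d
  induction d with
  | zero =>
    intro h
    have : (⟨(i : ℕ) + 0, h⟩ : Fin n) = i := by ext; simp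
    rw [this]; simp
  | succ d ih =>
    intro h
    have hd : (i : ℕ) + d < n := by omega
    have h1 := ih hd
    have h2 : f ⟨(i : ℕ) + d, hd⟩ < f ⟨(i : ℕ) + d + 1, h⟩ :=
      hf (show (⟨(i : ℕ) + d, hd⟩ : Fin n) < ⟨(i : ℕ) + d + 1, h⟩ by
        simp [Fin.mk_lt_mk])
    show f i + (d + 1) ≤ f ⟨(i : ℕ) + d + 1, h⟩
    omega

lemma chain_card (n m : ℕ) (hm : 1 ≤ m)
    [DecidablePred (Monotone : (Fin n → ℕ) → Prop)] :
    ((Fintype.piFinset fun _ : Fin n => Finset.Icc 1 m).filter Monotone).card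
      = (n + m - 1).choose n := by
  have hcard : (Finset.Icc 1 (n + m - 1)).card = n + m - 1 := by
    rw [Nat.card_Icc]; omega
  rw [← hcard, ← Finset.card_powersetCard]
  refine Finset.card_bij' (fun w _ => Finset.image (fun i : Fin n => w i + i) Finset.univ)
    (fun s hs => fun i : Fin n => s.orderEmbOfFin (Finset.mem_powersetCard.mp hs).2 i - i)
    ?_ ?_ ?_ ?_
  · intro w hw
    simp only [Finset.mem_filter, Fintype.mem_piFinset, Finset.mem_Icc] at hw
    obtain ⟨hmem, hmono⟩ := hw
    have hsm : StrictMono (fun i : Fin n => w i + (i : ℕ)) := by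
      intro i j hij
      have h1 := hmono hij.le
      have h2 : (i:ℕ) < j := hij
      dsimp; omega
    rw [Finset.mem_powersetCard]
    constructor
    · intro x hx
      simp only [Finset.mem_image, Finset.mem_univ, true_and] at hx
      obtain ⟨i, rfl⟩ := hx
      have h1 := (hmem i).1
      have h2 := (hmem i).2
      have h3 := i.isLt
      simp only [Finset.mem_Icc]; omega
    · rw [Finset.card_image_of_injective _ hsm.injective, Finset.card_univ, Fintype.card_fin]
  · intro s hs
    set e := s.orderEmbOfFin (Finset.mem_powersetCard.mp hs).2 with hE
    have hsub := (Finset.mem_powersetCard.mp hs).1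
    have hes : ∀ i, e i ∈ Finset.Icc 1 (n + m - 1) := fun i =>
      hsub (s.orderEmbOfFin_mem _ i)
    have hsm : StrictMono e := (s.orderEmbOfFin _).strictMono
    simp only [Finset.mem_filter, Fintype.mem_piFinset, Finset.mem_Icc]
    constructor
    · intro i
      have hi := i.isLt
      have h1 := (Finset.mem_Icc.mp (hes i)).1
      have h2 := (Finset.mem_Icc.mp (hes i)).2
      have hlow : e ⟨0, by omega⟩ + (i : ℕ) ≤ e i := by
        have hx := sm_add_le hsm ⟨0, by omega⟩ (i : ℕ) (by simpa using hi)
        have heq : (⟨((⟨0, by omega⟩ : Fin n) : ℕ) + (i : ℕ), by simpa using hi⟩ : Fin n) = i := by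
          ext; simp
        rwa [heq] at hx
      have h0 := (Finset.mem_Icc.mp (hes ⟨0, by omega⟩)).1
      have hhigh : e i + (n - 1 - (i : ℕ)) ≤ e ⟨n - 1, by omega⟩ := by
        have hx := sm_add_le hsm i (n - 1 - (i : ℕ)) (by omega)
        have heq : (⟨(i : ℕ) + (n - 1 - (i : ℕ)), by omega⟩ : Fin n) = ⟨n - 1, by omega⟩ := by
          ext; simp; omega
        rwa [heq] at hx
      have htop := (Finset.mem_Icc.mp (hes ⟨n - 1, by omega⟩)).2
      omega
    · intro i j hij
      have hij' : (i : ℕ) ≤ (j : ℕ) := hij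
      have hj := j.isLt
      have hx := sm_add_le hsm i ((j : ℕ) - (i : ℕ)) (by omega)
      have heq : (⟨(i : ℕ) + ((j : ℕ) - (i : ℕ)), by omega⟩ : Fin n) = j := by
        ext; simp; omega
      rw [heq] at hx
      have h1 := (Finset.mem_Icc.mp (hes i)).1
      dsimp only
      omega
  · intro w hw
    simp only [Finset.mem_filter, Fintype.mem_piFinset, Finset.mem_Icc] at hw
    obtain ⟨hmem, hmono⟩ := hw
    have hsm : StrictMono (fun i : Fin n => w i + (i : ℕ)) := by
      intro i j hij
      have h1 := hmono hij.le
      have h2 : (i:ℕ) < j := hij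
      dsimp; omega
    have key : ∀ (hp : (Finset.image (fun i : Fin n => w i + (i : ℕ)) Finset.univ).card = n)
        (i : Fin n),
        (Finset.image (fun i : Fin n => w i + (i : ℕ)) Finset.univ).orderEmbOfFin hp i
          = w i + i := by
      intro hp i
      rw [← Finset.orderEmbOfFin_unique hp
        (fun x => Finset.mem_image_of_mem _ (Finset.mem_univ x)) hsm]
    funext i
    rw [key _ i]
    simp
  · intro s hs
    dsimp only
    set e := s.orderEmbOfFin (Finset.mem_powersetCard.mp hs).2 with hE
    have h := (Finset.mem_powersetCard.mp hs).2
    have hsm : StrictMono e := (s.orderEmbOfFin _).strictMono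
    have hge : ∀ i : Fin n, (i : ℕ) ≤ e i := by
      intro i
      have hi := i.isLt
      have hx := sm_add_le hsm ⟨0, by omega⟩ (i : ℕ) (by simpa using hi)
      have heq : (⟨((⟨0, by omega⟩ : Fin n) : ℕ) + (i : ℕ), by simpa using hi⟩ : Fin n) = i := by
        ext; simp
      rw [heq] at hx
      omega
    have hfun : (fun i : Fin n => e i - (i : ℕ) + (i : ℕ)) = fun i => e i := by
      funext i; have := hge i; omega
    rw [hfun]
    apply Finset.eq_of_subset_of_card_le
    · intro x hx
      simp only [Finset.mem_image, Finset.mem_univ, true_and] at hx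
      obtain ⟨i, rfl⟩ := hx
      exact s.orderEmbOfFin_mem _ i
    · rw [Finset.card_image_of_injective _ hsm.injective, Finset.card_univ, Fintype.card_fin, h]

lemma tail_mono_iff {m : ℕ} (v : Fin (m + 1) → ℕ) :
    (∀ j l : Fin (m + 1), 1 ≤ (j : ℕ) → j ≤ l → v j ≤ v l) ↔ Monotone (Fin.tail v) := by
  constructor
  · intro H i j hij
    exact H i.succ j.succ (by simp [Fin.val_succ]) (Fin.succ_le_succ_iff.mpr hij)
  · intro H j l hj hjl
    have hjlt := j.isLt
    have hllt := l.isLt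
    have hjl' : (j : ℕ) ≤ (l : ℕ) := hjl
    have hj' : (j : ℕ) - 1 < m := by omega
    have hl' : (l : ℕ) - 1 < m := by omega
    have hej : j = Fin.succ ⟨(j : ℕ) - 1, hj'⟩ := by ext; simp [Fin.val_succ]; omega
    have hel : l = Fin.succ ⟨(l : ℕ) - 1, hl'⟩ := by ext; simp [Fin.val_succ]; omega
    rw [hej, hel]
    exact H (show (⟨(j : ℕ) - 1, hj'⟩ : Fin m) ≤ ⟨(l : ℕ) - 1, hl'⟩ by
      simp [Fin.mk_le_mk]; omega)

lemma cons_mono {m : ℕ} (hm : 0 < m) (a : ℕ) (w : Fin m → ℕ) (hw : Monotone w)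
    (ha : a ≤ w ⟨0, hm⟩) : Monotone (Fin.cons a w : Fin (m + 1) → ℕ) := by
  intro i j hij
  induction i using Fin.cases with
  | zero =>
    induction j using Fin.cases with
    | zero => exact le_rfl
    | succ jj =>
      rw [Fin.cons_zero, Fin.cons_succ]
      exact ha.trans (hw (by simp [Fin.le_def]))
  | succ ii =>
    induction j using Fin.cases with
    | zero => exact absurd hij (by simp [Fin.le_def])
    | succ jj =>
      rw [Fin.cons_succ, Fin.cons_succ]
      exact hw (Fin.succ_le_succ_iff.mp hij)

/-- For `r ≥ 2` and `k ≥ 2`, the number of tuples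
`(i_1, …, i_k)` with every `i_j ∈ {1,…,r}`, `i_1 > i_2` and `i_2 ≤ i_3 ≤ … ≤ i_k`
equals `M(r,k) = (k-1) * C(k+r-2, k)`. -/
theorem card_chen_basis_degree_k (r k : ℕ) (hr : 2 ≤ r) (hk : 2 ≤ k) :
    Nat.card
      {v : Fin k → ℕ //
        (∀ j, v j ∈ Finset.Icc 1 r) ∧
        v ⟨1, by omega⟩ < v ⟨0, by omega⟩ ∧
        (∀ j l : Fin k, 1 ≤ (j : ℕ) → j ≤ l → v j ≤ v l)} =
      (k - 1) * Nat.choose (k + r - 2) k := by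
  classical
  obtain ⟨m, rfl⟩ : ∃ m, k = m + 1 := ⟨k - 1, by omega⟩
  have hm : 0 < m := by omega
  set S : Finset (Fin (m + 1) → ℕ) :=
    (Fintype.piFinset fun _ => Finset.Icc 1 r).filter
      (fun v => v ⟨1, by omega⟩ < v ⟨0, by omega⟩ ∧
        ∀ j l : Fin (m + 1), 1 ≤ (j : ℕ) → j ≤ l → v j ≤ v l) with hS
  set Cm : Finset (Fin m → ℕ) :=
    (Fintype.piFinset fun _ => Finset.Icc 1 r).filter Monotone with hCm
  set Cm1 : Finset (Fin (m + 1) → ℕ) :=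
    (Fintype.piFinset fun _ => Finset.Icc 1 r).filter Monotone with hCm1
  set T2 : Finset (ℕ × (Fin m → ℕ)) :=
    (Finset.Icc 1 r ×ˢ Cm).filter (fun p => p.2 ⟨0, hm⟩ < p.1) with hT2
  set T3 : Finset (ℕ × (Fin m → ℕ)) :=
    (Finset.Icc 1 r ×ˢ Cm).filter (fun p => p.1 ≤ p.2 ⟨0, hm⟩) with hT3
  clear_value S Cm Cm1 T2 T3
  -- Step A : Nat.card = S.card
  have stepA : Nat.card
      {v : Fin (m + 1) → ℕ //
        (∀ j, v j ∈ Finset.Icc 1 r) ∧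
        v ⟨1, by omega⟩ < v ⟨0, by omega⟩ ∧
        (∀ j l : Fin (m + 1), 1 ≤ (j : ℕ) → j ≤ l → v j ≤ v l)} = S.card := by
    refine Eq.trans (Nat.card_congr (Equiv.subtypeEquivRight (q := fun v => v ∈ S)
      fun v => ?_)) (Nat.card_eq_finsetCard S)
    simp only [hS, Finset.mem_filter, Fintype.mem_piFinset]
  rw [stepA]
  clear stepA
  -- counts of chains
  have hr1 : 1 ≤ r := by omega
  have c1 : Cm.card = (m + r - 1).choose m := by
    rw [hCm]; exact chain_card m r hr1
  have c2 : Cm1.card = (m + r).choose (m + 1) := by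
    rw [hCm1]
    have h := chain_card (m + 1) r hr1
    rwa [show m + 1 + r - 1 = m + r by omega] at h
  -- bijection S ≃ T2
  have b1 : S.card = T2.card := by
    refine Finset.card_nbij' (fun v => (v 0, Fin.tail v)) (fun p => Fin.cons p.1 p.2)
      ?_ ?_ ?_ ?_
    · intro v hv
      simp only [Finset.mem_coe, hS, Finset.mem_filter, Fintype.mem_piFinset] at hv
      obtain ⟨hmem, hlt, htail⟩ := hv
      simp only [Finset.mem_coe, hT2, hCm, Finset.mem_filter, Finset.mem_product, Fintype.mem_piFinset]
      exact ⟨⟨hmem 0, fun i => hmem i.succ, (tail_mono_iff v).mp htail⟩, hlt⟩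
    · intro p hp
      simp only [Finset.mem_coe, hT2, hCm, Finset.mem_filter, Finset.mem_product, Fintype.mem_piFinset] at hp
      obtain ⟨⟨h1, h2, h3⟩, h4⟩ := hp
      simp only [Finset.mem_coe, hS, Finset.mem_filter, Fintype.mem_piFinset]
      refine ⟨fun i => ?_, ?_, ?_⟩
      · induction i using Fin.cases with
        | zero => simpa [Fin.cons_zero] using h1
        | succ ii => simpa [Fin.cons_succ] using h2 ii
      · have e1 : (⟨1, by omega⟩ : Fin (m + 1)) = Fin.succ ⟨0, hm⟩ := rfl
        have e0 : (⟨0, by omega⟩ : Fin (m + 1)) = (0 : Fin (m + 1)) := rfl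
        rw [e1, e0, Fin.cons_succ, Fin.cons_zero]
        exact h4
      · rw [tail_mono_iff, Fin.tail_cons]
        exact h3
    · intro v _
      exact Fin.cons_self_tail v
    · intro p _
      refine Prod.ext ?_ ?_
      · simp [Fin.cons_zero]
      · simp [Fin.tail_cons]
  -- split
  have b2 : T2.card + T3.card = r * (m + r - 1).choose m := by
    have hsplit := Finset.card_filter_add_card_filter_not
      (s := Finset.Icc 1 r ×ˢ Cm) (p := fun p => p.2 ⟨0, hm⟩ < p.1)
    have hneg : (Finset.Icc 1 r ×ˢ Cm).filter (fun p => ¬ p.2 ⟨0, hm⟩ < p.1) = T3 := by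
      rw [hT3]
      apply Finset.filter_congr
      intro x _
      simp [not_lt]
    rw [hneg, ← hT2] at hsplit
    rw [hsplit, Finset.card_product, Nat.card_Icc, c1,
      show r + 1 - 1 = r by omega]
  -- bijection T3 ≃ Cm1
  have b3 : T3.card = Cm1.card := by
    refine Finset.card_nbij' (fun p => Fin.cons p.1 p.2) (fun v => (v 0, Fin.tail v))
      ?_ ?_ ?_ ?_
    · intro p hp
      simp only [Finset.mem_coe, hT3, hCm, Finset.mem_filter, Finset.mem_product, Fintype.mem_piFinset] at hp
      obtain ⟨⟨h1, h2, h3⟩, h4⟩ := hp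
      simp only [Finset.mem_coe, hCm1, Finset.mem_filter, Fintype.mem_piFinset]
      refine ⟨fun i => ?_, cons_mono hm p.1 p.2 h3 h4⟩
      · induction i using Fin.cases with
        | zero => simpa [Fin.cons_zero] using h1
        | succ ii => simpa [Fin.cons_succ] using h2 ii
    · intro v hv
      simp only [Finset.mem_coe, hCm1, Finset.mem_filter, Fintype.mem_piFinset] at hv
      obtain ⟨hmem, hmono⟩ := hv
      simp only [Finset.mem_coe, hT3, hCm, Finset.mem_filter, Finset.mem_product, Fintype.mem_piFinset]
      refine ⟨⟨hmem 0, fun i => hmem i.succ, fun i j hij => hmono (Fin.succ_le_succ_iff.mpr hij)⟩,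
        hmono (Fin.zero_le _)⟩
    · intro p _
      refine Prod.ext ?_ ?_
      · simp [Fin.cons_zero]
      · simp [Fin.tail_cons]
    · intro v _
      exact Fin.cons_self_tail v
  -- arithmetic
  have hgoal1 : m + 1 - 1 = m := rfl
  have hgoal2 : m + 1 + r - 2 = m + r - 1 := by omega
  rw [hgoal1, hgoal2]
  set n := m + r - 1 with hn
  clear_value n
  set x := n.choose m with hx
  set y := n.choose (m + 1) with hy
  clear_value x y
  have c2' : Cm1.card = x + y := by
    rw [c2]
    have he : m + r = n + 1 := by omega
    rw [he, hx, hy]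
    exact Nat.choose_succ_succ' n m
  have h1 : S.card + (x + y) = r * x := by
    rw [b1, ← c2', ← b3]
    rw [← c1] at b2
    rw [b2, c1]
  have h2 : y * (m + 1) = x * (r - 1) := by
    rw [hx, hy]
    have := Nat.choose_succ_right_eq n m
    rwa [show n - m = r - 1 by omega] at this
  have key : S.card + (x + y) = (y * m + y) + x := by
    rw [h1]
    have e1 : y * m + y = y * (m + 1) := by ring
    rw [e1, h2]
    have e2 : r - 1 + 1 = r := by omega
    calc r * x = x * (r - 1 + 1) := by rw [e2]; ring
      _ = x * (r - 1) + x := by ring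
  have : S.card = y * m := by omega
  rw [this, mul_comm]
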